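/- Let p be a prime number and n a natural number with base-p digit expansion n = Σ_l m_l p^l, where m_l is the l-th digit of n in base p (so 0 ≤ m_l ≤ p−1). Then the p-adic valuation of n! equals Σ_l m_l · v_p((p^l)!); that is, padicValNat p (n!) = Σ_l (l-th base-p digit of n) · padicValNat p ((p^l)!). -/

import Mathlib

open Nat

lemma aux_sum_getD_mul_pow (p : ℕ) (L : List ℕ) :
    ∑ l ∈ Finset.range L.length, L.getD l 0 * p ^ l = Nat.ofDigits p L := by
  induction L with
  | nil => simp
  | cons a t ih =>
    rw [List.length_cons, Finset.sum_range_succ', Nat.ofDigits_cons]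
    simp only [List.getD_cons_succ, List.getD_cons_zero, pow_succ, pow_zero, mul_one]
    have : ∑ i ∈ Finset.range t.length, t.getD i 0 * (p ^ i * p)
        = (∑ i ∈ Finset.range t.length, t.getD i 0 * p ^ i) * p := by
      rw [Finset.sum_mul]; simp [mul_assoc]
    rw [this, ih]; ring

lemma aux_sum_getD (L : List ℕ) :
    ∑ l ∈ Finset.range L.length, L.getD l 0 = L.sum := by
  induction L with
  | nil => simp
  | cons a t ih =>
    rw [List.length_cons, Finset.sum_range_succ']
    simp only [List.getD_cons_succ, List.getD_cons_zero]
    rw [ih, List.sum_cons, Nat.add_comm]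

lemma aux_digits_pow_sum (p : ℕ) (hp : 2 ≤ p) (l : ℕ) :
    (Nat.digits p (p ^ l)).sum = 1 := by
  induction l with
  | zero =>
    rw [pow_zero, Nat.digits_def' hp (by norm_num : (0:ℕ) < 1),
      Nat.mod_eq_of_lt (by omega), Nat.div_eq_of_lt (by omega)]
    simp
  | succ l ih =>
    rw [Nat.digits_def' hp (Nat.pow_pos (by omega))]
    have h1 : p ^ (l + 1) % p = 0 := by
      simp [pow_succ, Nat.mul_mod_left]
    have h2 : p ^ (l + 1) / p = p ^ l := by
      rw [pow_succ, Nat.mul_div_cancel _ (by omega)]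
    rw [h1, h2, List.sum_cons, ih]

theorem stmt6 (p : ℕ) (hp : p.Prime) (n : ℕ) :
    padicValNat p (n !) =
      ∑ l ∈ Finset.range (Nat.digits p n).length,
        (Nat.digits p n).getD l 0 * padicValNat p ((p ^ l)!) := by
  haveI : Fact p.Prime := ⟨hp⟩
  have hp2 := hp.two_le
  apply Nat.eq_of_mul_eq_mul_left (show 0 < p - 1 by omega)
  rw [sub_one_mul_padicValNat_factorial, Finset.mul_sum]
  have hterm : ∀ l ∈ Finset.range (Nat.digits p n).length,
      (p - 1) * ((Nat.digits p n).getD l 0 * padicValNat p ((p ^ l)!))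
      = (Nat.digits p n).getD l 0 * p ^ l - (Nat.digits p n).getD l 0 := by
    intro l _
    rw [mul_left_comm, sub_one_mul_padicValNat_factorial, aux_digits_pow_sum p hp2,
      Nat.mul_sub_one]
  rw [Finset.sum_congr rfl hterm,
    Finset.sum_tsub_distrib _ (fun l _ => Nat.le_mul_of_pos_right _ (Nat.pow_pos (by omega))),
    aux_sum_getD_mul_pow, aux_sum_getD, Nat.ofDigits_digits]
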